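/- (Explicit noncontextual model attaining S = (1/2)(1 + 1/n) for the (n,2)-mporac, showing the measurement equivalences do not lower the noncontextual bound.) Fix n ≥ 2. Define, on the binary ontic state space λ ∈ {0,1}: epistemic states μ(λ|x) = 1 if λ = x₀ and 0 otherwise, for x ∈ {0,1}^n; and response functions ξ(k|y,λ) for y ∈ Fin n, k ∈ {0,1} by ξ(k|0,λ) = 1 if k = λ and 0 otherwise, while for y ≠ 0, ξ(λ|y,λ) = (n−2)/(2(n−1)) and ξ(1−λ|y,λ) = n/(2(n−1)). Let p(k|x,y) = Σ_{λ ∈ {0,1}} μ(λ|x) ξ(k|y,λ). Then: (i) for all x, y, p(·|x,y) is a probability distribution on {0,1}; (ii) the (n,2)-porac success metric satisfies (1/(n·2^n)) Σ_{x ∈ {0,1}^n} Σ_{y ∈ Fin n} p(x_y|x,y) = (n+1)/(2n); (iii) the response functions satisfy the measurement operational equivalence (1/n) Σ_{y ∈ Fin n} ξ(0|y,λ) = (1/n) Σ_{y ∈ Fin n} ξ(1|y,λ) for each λ ∈ {0,1}; and (iv) the epistemic states are parity oblivious: for every subset T ⊆ Fin n with |T| ≥ 2 and each λ ∈ {0,1},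 Σ_{x : ⊕_{i∈T} x_i = 0} μ(λ|x) = Σ_{x : ⊕_{i∈T} x_i = 1} μ(λ|x). -/
import Mathlib


open Finset

/-- Epistemic states of the noncontextual model for the (n,2)-mporac: `μ(λ|x) = 1` iff
`λ = x₀`, the first bit of Alice's input string `x ∈ {0,1}ⁿ`. -/
noncomputable def epistemic (n : ℕ) [NeZero n] (lam : Fin 2) (x : Fin n → Fin 2) : ℝ :=
  if lam = x 0 then 1 else 0

/-- Response functions of the noncontextual model for the (n,2)-mporac:
`ξ(k|0,λ) = δ_{k,λ}`, and for `y ≠ 0`, `ξ(λ|y,λ) = (n−2)/(2(n−1))` and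
`ξ(1−λ|y,λ) = n/(2(n−1))`. -/
noncomputable def response (n : ℕ) [NeZero n] (k : Fin 2) (y : Fin n) (lam : Fin 2) : ℝ :=
  if y = 0 then (if k = lam then 1 else 0)
  else if k = lam then ((n : ℝ) - 2) / (2 * ((n : ℝ) - 1))
  else (n : ℝ) / (2 * ((n : ℝ) - 1))

/-- The behaviour `p(k|x,y) = Σ_λ μ(λ|x) ξ(k|y,λ)` of the noncontextual model. -/
noncomputable def ncBehaviour (n : ℕ) [NeZero n] (k : Fin 2) (x : Fin n → Fin 2) (y : Fin n) :
    ℝ :=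
  ∑ lam : Fin 2, epistemic n lam x * response n k y lam

/-- Flip the bit at position `j`. -/
def bitflip {n : ℕ} (j : Fin n) (x : Fin n → Fin 2) : Fin n → Fin 2 :=
  Function.update x j (x j + 1)

lemma two_cases (a : Fin 2) : a = 0 ∨ a = 1 := by omega

lemma bitflip_bitflip {n : ℕ} (j : Fin n) (x : Fin n → Fin 2) :
    bitflip j (bitflip j x) = x := by
  have h : ∀ a : Fin 2, a + 1 + 1 = a := by decide
  funext i
  by_cases hij : i = j
  · subst hij
    simp [bitflip, Function.update_self, h]
  · simp [bitflip, Function.update_of_ne hij]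

lemma bitflip_apply_ne {n : ℕ} (j i : Fin n) (x : Fin n → Fin 2) (h : i ≠ j) :
    bitflip j x i = x i := Function.update_of_ne h _ _

lemma bitflip_apply_self {n : ℕ} (j : Fin n) (x : Fin n → Fin 2) :
    bitflip j x j = x j + 1 := Function.update_self _ _ _

lemma bitflip_parity {n : ℕ} (j : Fin n) (T : Finset (Fin n)) (hj : j ∈ T)
    (x : Fin n → Fin 2) :
    (∑ i ∈ T, ((bitflip j x i : ℕ))) % 2 = 1 - (∑ i ∈ T, ((x i : ℕ))) % 2 := by
  rw [← Finset.sum_erase_add T _ hj, ← Finset.sum_erase_add T (fun i => ((x i : ℕ))) hj]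
  have h1 : ∑ i ∈ T.erase j, ((bitflip j x i : ℕ)) = ∑ i ∈ T.erase j, ((x i : ℕ)) :=
    Finset.sum_congr rfl fun i hi => by
      rw [bitflip_apply_ne j i x (Finset.ne_of_mem_erase hi)]
  rw [h1, bitflip_apply_self]
  have h2 : ∀ a : Fin 2, ((a + 1 : Fin 2) : ℕ) = 1 - (a : ℕ) := by decide
  have h3 : ((x j : ℕ)) ≤ 1 := by omega
  rw [h2]
  omega

theorem noncontextual_model_mporac (n : ℕ) [NeZero n] (hn : 2 ≤ n) :
    (∀ (x : Fin n → Fin 2) (y : Fin n),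
      (∀ k, 0 ≤ ncBehaviour n k x y) ∧ ∑ k : Fin 2, ncBehaviour n k x y = 1) ∧
    ((1 / ((n : ℝ) * 2 ^ n)) * ∑ x : Fin n → Fin 2, ∑ y : Fin n, ncBehaviour n (x y) x y
      = ((n : ℝ) + 1) / (2 * n)) ∧
    (∀ lam : Fin 2, (1 / (n : ℝ)) * ∑ y : Fin n, response n 0 y lam
      = (1 / (n : ℝ)) * ∑ y : Fin n, response n 1 y lam) ∧
    (∀ T : Finset (Fin n), 2 ≤ T.card → ∀ lam : Fin 2,
      ∑ x ∈ univ.filter (fun x : Fin n → Fin 2 => (∑ i ∈ T, (x i : ℕ)) % 2 = 0),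
        epistemic n lam x
      = ∑ x ∈ univ.filter (fun x : Fin n → Fin 2 => (∑ i ∈ T, (x i : ℕ)) % 2 = 1),
        epistemic n lam x) := by
  have h2n : (2 : ℝ) ≤ (n : ℝ) := by exact_mod_cast hn
  have hne : (n : ℝ) - 1 ≠ 0 := by linarith
  have hn0 : (n : ℝ) ≠ 0 := by linarith
  have hB : ∀ (k : Fin 2) (x : Fin n → Fin 2) (y : Fin n),
      ncBehaviour n k x y = response n k y (x 0) := by
    intro k x y
    rcases two_cases (x 0) with h | h <;>
      simp [ncBehaviour, Fin.sum_univ_two, epistemic, h]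
  have hsum1 : ∀ (a : Fin 2) (y : Fin n),
      response n 0 y a + response n 1 y a = 1 := by
    intro a y
    by_cases hy : y = 0
    · rcases two_cases a with h | h <;> simp [response, hy, h]
    · rcases two_cases a with h | h <;> simp [response, hy, h] <;> field_simp <;> ring
  refine ⟨?_, ?_, ?_, ?_⟩
  · -- normalisation
    intro x y
    constructor
    · intro k
      rw [hB]
      unfold response
      by_cases hy : y = 0
      · simp only [hy, if_true]; split <;> norm_num
      · simp only [hy, if_false]
        split
        · exact div_nonneg (by linarith) (by linarith)
        · exact div_nonneg (by linarith) (by linarith)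
    · rw [Fin.sum_univ_two, hB, hB]
      exact hsum1 (x 0) y
  · -- success metric
    have key : ∀ y : Fin n, y ≠ 0 →
        ∑ x : Fin n → Fin 2, response n (x y) y (x 0) = 2 ^ n / 2 := by
      intro y hy
      set F : (Fin n → Fin 2) → ℝ := fun x => response n (x y) y (x 0) with hF
      have hinv : Function.Involutive (bitflip y) := bitflip_bitflip y
      have hsum : ∑ x : Fin n → Fin 2, F x = ∑ x : Fin n → Fin 2, F (bitflip y x) :=
        (Equiv.sum_comp hinv.toPerm F).symm
      have pt : ∀ x : Fin n → Fin 2, F x + F (bitflip y x) = 1 := by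
        intro x
        have h0 : bitflip y x 0 = x 0 := bitflip_apply_ne y 0 x (Ne.symm hy)
        have hyv : bitflip y x y = x y + 1 := bitflip_apply_self y x
        simp only [hF, h0, hyv]
        rcases two_cases (x y) with h | h <;> rcases two_cases (x 0) with h' | h' <;>
          simp [response, hy, h, h'] <;> field_simp <;> ring
      have htot : ∑ x : Fin n → Fin 2, (F x + F (bitflip y x)) = (2 : ℝ) ^ n := by
        rw [Finset.sum_congr rfl fun x _ => pt x]
        simp [Finset.card_univ]
      rw [Finset.sum_add_distrib, ← hsum] at htot
      linarith
    have hzero : ∑ x : Fin n → Fin 2, response n (x 0) 0 (x 0) = (2 : ℝ) ^ n := by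
      have : ∀ x : Fin n → Fin 2, response n (x 0) 0 (x 0) = 1 := by
        intro x; simp [response]
      rw [Finset.sum_congr rfl fun x _ => this x]
      simp [Finset.card_univ]
    have hS : ∑ x : Fin n → Fin 2, ∑ y : Fin n, ncBehaviour n (x y) x y
        = ((n : ℝ) - 1) * (2 ^ n / 2) + 2 ^ n := by
      have : ∀ x : Fin n → Fin 2, ∑ y : Fin n, ncBehaviour n (x y) x y
          = ∑ y : Fin n, response n (x y) y (x 0) :=
        fun x => Finset.sum_congr rfl fun y _ => hB (x y) x y
      rw [Finset.sum_congr rfl fun x _ => this x, Finset.sum_comm,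
        ← Finset.sum_erase_add univ _ (Finset.mem_univ (0 : Fin n)), hzero]
      congr 1
      rw [Finset.sum_congr rfl (fun y hy => key y (Finset.ne_of_mem_erase hy)),
        Finset.sum_const, Finset.card_erase_of_mem (Finset.mem_univ _), Finset.card_univ,
        Fintype.card_fin, nsmul_eq_mul, Nat.cast_sub (by omega : 1 ≤ n), Nat.cast_one]
    rw [hS]
    field_simp
    ring
  · -- measurement operational equivalence
    intro lam
    congr 1
    have split0 : ∀ k : Fin 2, ∑ y : Fin n, response n k y lam
        = (∑ y ∈ univ.erase (0 : Fin n), response n k y lam) + response n k 0 lam :=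
      fun k => (Finset.sum_erase_add univ _ (Finset.mem_univ (0 : Fin n))).symm
    rw [split0 0, split0 1]
    have hconst : ∀ (k : Fin 2), ∑ y ∈ univ.erase (0 : Fin n), response n k y lam
        = ((n : ℝ) - 1) * (if k = lam then ((n : ℝ) - 2) / (2 * ((n : ℝ) - 1))
            else (n : ℝ) / (2 * ((n : ℝ) - 1))) := by
      intro k
      have : ∀ y ∈ univ.erase (0 : Fin n), response n k y lam
          = (if k = lam then ((n : ℝ) - 2) / (2 * ((n : ℝ) - 1))
              else (n : ℝ) / (2 * ((n : ℝ) - 1))) := by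
        intro y hy
        simp [response, Finset.ne_of_mem_erase hy]
      rw [Finset.sum_congr rfl this, Finset.sum_const,
        Finset.card_erase_of_mem (Finset.mem_univ _), Finset.card_univ, Fintype.card_fin,
        nsmul_eq_mul, Nat.cast_sub (by omega : 1 ≤ n), Nat.cast_one]
    rw [hconst 0, hconst 1]
    rcases two_cases lam with h | h <;> simp [response, h] <;> field_simp <;> ring
  · -- parity obliviousness
    intro T hT lam
    obtain ⟨a, ha, b, hb, hab⟩ := Finset.one_lt_card.mp (show 1 < T.card by omega)
    have hj : ∃ j, j ∈ T ∧ j ≠ 0 := by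
      by_cases h : a = 0
      · exact ⟨b, hb, fun hb0 => hab (by rw [h, hb0])⟩
      · exact ⟨a, ha, h⟩
    obtain ⟨j, hjT, hj0⟩ := hj
    refine Finset.sum_nbij' (bitflip j) (bitflip j) ?_ ?_ ?_ ?_ ?_
    · intro x hx
      simp only [Finset.mem_filter, Finset.mem_univ, true_and] at hx ⊢
      rw [bitflip_parity j T hjT x, hx]
    · intro x hx
      simp only [Finset.mem_filter, Finset.mem_univ, true_and] at hx ⊢
      rw [bitflip_parity j T hjT x, hx]
    · intro x _; exact bitflip_bitflip j x
    · intro x _; exact bitflip_bitflip j x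
    · intro x _
      have h0 : bitflip j x 0 = x 0 := bitflip_apply_ne j 0 x (Ne.symm hj0)
      simp [epistemic, h0]
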